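/- Assume the antilinear system Σₐ is stabilizable, Q ∈ ℂ^{n×n} and R ∈ ℂ^{m×m} are Hermitian positive definite, and let P_N be the unique Hermitian positive definite solution of the normal Riccati equation −Q_N = A_N^H P_N A_N − P_N − A_N^H P_N B_N (R_N + B_N^H P_N B_N)^{-1} B_N^H P_N A_N. Then the iteration P_N(0) = Q_N, P_N(k+1) = Q_N + A_N^H (P_N(k)^{-1} + B_N R_N^{-1} B_N^H)^{-1} A_N is well defined (each P_N(k) is Hermitian positive definite) and P_N(k) → P_N entrywise as k → ∞. -/

import Mathlib

open Matrix Filter Topology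
open scoped ENNReal ComplexOrder

noncomputable section

/-- Entrywise complex conjugate of a matrix, `M^#`. -/
def mconj {k l : Type*} (A : Matrix k l ℂ) : Matrix k l ℂ := A.map (starRingEnd ℂ)

variable {n m : ℕ}

/-- The antilinear system `x(k+1) = A₂^# x^#(k) + B₂^# u^#(k)` is stabilizable if some
feedback `u(k) = K₁x(k) + K₂^#x^#(k)` drives every closed-loop solution to zero. -/
def AntiStabilizable (A₂ : Matrix (Fin n) (Fin n) ℂ) (B₂ : Matrix (Fin n) (Fin m) ℂ) :
    Prop :=
  ∃ K₁ K₂ : Matrix (Fin m) (Fin n) ℂ, ∀ x : ℕ → (Fin n → ℂ),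
    (∀ k : ℕ, x (k + 1) =
        mconj A₂ *ᵥ star (x k) + mconj B₂ *ᵥ star (K₁ *ᵥ x k + mconj K₂ *ᵥ star (x k))) →
    Tendsto x atTop (𝓝 0)

/-- The trajectory of the antilinear system `x(k+1) = A₂^# x^#(k) + B₂^# u^#(k)` from
the initial condition `x₀` under the control sequence `u`. -/
def atraj (A₂ : Matrix (Fin n) (Fin n) ℂ) (B₂ : Matrix (Fin n) (Fin m) ℂ)
    (x₀ : Fin n → ℂ) (u : ℕ → Fin m → ℂ) : ℕ → Fin n → ℂ
  | 0 => x₀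
  | k + 1 => mconj A₂ *ᵥ star (atraj A₂ B₂ x₀ u k) + mconj B₂ *ᵥ star (u k)

/-- The quadratic cost `J = Σ_k (x(k)^H Q x(k) + u(k)^H R u(k))`, valued in `[0,∞]`. -/
def cost (Q : Matrix (Fin n) (Fin n) ℂ) (R : Matrix (Fin m) (Fin m) ℂ)
    (x : ℕ → Fin n → ℂ) (u : ℕ → Fin m → ℂ) : ℝ≥0∞ :=
  ∑' k : ℕ, ENNReal.ofReal ((star (x k) ⬝ᵥ (Q *ᵥ x k)).re + (star (u k) ⬝ᵥ (R *ᵥ u k)).re)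

/-- The LQR problem for the antilinear system is solvable: for every initial condition
there is a control of finite cost minimizing the cost. -/
def LQRSolvable (A₂ : Matrix (Fin n) (Fin n) ℂ) (B₂ : Matrix (Fin n) (Fin m) ℂ)
    (Q : Matrix (Fin n) (Fin n) ℂ) (R : Matrix (Fin m) (Fin m) ℂ) : Prop :=
  ∀ x₀ : Fin n → ℂ, ∃ u : ℕ → Fin m → ℂ,
    cost Q R (atraj A₂ B₂ x₀ u) u < ⊤ ∧
    ∀ u' : ℕ → Fin m → ℂ, cost Q R (atraj A₂ B₂ x₀ u) u ≤ cost Q R (atraj A₂ B₂ x₀ u') u'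

/-- The anti-Riccati equation
`-Q = A₂^H P^# A₂ - A₂^H P^# B₂ (R + B₂^H P^# B₂)⁻¹ B₂^H P^# A₂ - P`. -/
def AntiRiccati (A₂ : Matrix (Fin n) (Fin n) ℂ) (B₂ : Matrix (Fin n) (Fin m) ℂ)
    (Q : Matrix (Fin n) (Fin n) ℂ) (R : Matrix (Fin m) (Fin m) ℂ)
    (P : Matrix (Fin n) (Fin n) ℂ) : Prop :=
  -Q = A₂ᴴ * mconj P * A₂ -
      A₂ᴴ * mconj P * B₂ * (R + B₂ᴴ * mconj P * B₂)⁻¹ * (B₂ᴴ * mconj P * A₂) - P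

/-- `A_N = A₂^# (I - B₂ (R + B₂^H Q^# B₂)⁻¹ B₂^H Q^#) A₂`. -/
def AN (A₂ : Matrix (Fin n) (Fin n) ℂ) (B₂ : Matrix (Fin n) (Fin m) ℂ)
    (Q : Matrix (Fin n) (Fin n) ℂ) (R : Matrix (Fin m) (Fin m) ℂ) :
    Matrix (Fin n) (Fin n) ℂ :=
  mconj A₂ * (1 - B₂ * (R + B₂ᴴ * mconj Q * B₂)⁻¹ * B₂ᴴ * mconj Q) * A₂

/-- `B_N = [B₂^#, A₂^# B₂]`. -/
def BN (A₂ : Matrix (Fin n) (Fin n) ℂ) (B₂ : Matrix (Fin n) (Fin m) ℂ) :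
    Matrix (Fin n) (Fin m ⊕ Fin m) ℂ :=
  Matrix.fromCols (mconj B₂) (mconj A₂ * B₂)

/-- `Q_N = Q + A₂^H (Q^{-#} + B₂ R⁻¹ B₂^H)⁻¹ A₂`. -/
def QN (A₂ : Matrix (Fin n) (Fin n) ℂ) (B₂ : Matrix (Fin n) (Fin m) ℂ)
    (Q : Matrix (Fin n) (Fin n) ℂ) (R : Matrix (Fin m) (Fin m) ℂ) :
    Matrix (Fin n) (Fin n) ℂ :=
  Q + A₂ᴴ * ((mconj Q)⁻¹ + B₂ * R⁻¹ * B₂ᴴ)⁻¹ * A₂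

/-- `R_N = diag(R^#, R + B₂^H Q^# B₂)`. -/
def RN (B₂ : Matrix (Fin n) (Fin m) ℂ)
    (Q : Matrix (Fin n) (Fin n) ℂ) (R : Matrix (Fin m) (Fin m) ℂ) :
    Matrix (Fin m ⊕ Fin m) (Fin m ⊕ Fin m) ℂ :=
  Matrix.fromBlocks (mconj R) 0 0 (R + B₂ᴴ * mconj Q * B₂)

/-- The normal Riccati equation
`-Q_N = A_N^H P A_N - P - A_N^H P B_N (R_N + B_N^H P B_N)⁻¹ B_N^H P A_N`. -/
def NormalRiccati (A₂ : Matrix (Fin n) (Fin n) ℂ) (B₂ : Matrix (Fin n) (Fin m) ℂ)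
    (Q : Matrix (Fin n) (Fin n) ℂ) (R : Matrix (Fin m) (Fin m) ℂ)
    (P : Matrix (Fin n) (Fin n) ℂ) : Prop :=
  -(QN A₂ B₂ Q R) =
    (AN A₂ B₂ Q R)ᴴ * P * AN A₂ B₂ Q R - P -
      (AN A₂ B₂ Q R)ᴴ * P * BN A₂ B₂ *
        (RN B₂ Q R + (BN A₂ B₂)ᴴ * P * BN A₂ B₂)⁻¹ *
        ((BN A₂ B₂)ᴴ * P * AN A₂ B₂ Q R)

/-- The normal Riccati iteration `P_N(0) = Q_N`,
`P_N(k+1) = Q_N + A_N^H (P_N(k)⁻¹ + B_N R_N⁻¹ B_N^H)⁻¹ A_N`. -/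
def normalIter (A₂ : Matrix (Fin n) (Fin n) ℂ) (B₂ : Matrix (Fin n) (Fin m) ℂ)
    (Q : Matrix (Fin n) (Fin n) ℂ) (R : Matrix (Fin m) (Fin m) ℂ) :
    ℕ → Matrix (Fin n) (Fin n) ℂ
  | 0 => QN A₂ B₂ Q R
  | k + 1 => QN A₂ B₂ Q R +
      (AN A₂ B₂ Q R)ᴴ *
        ((normalIter A₂ B₂ Q R k)⁻¹ + BN A₂ B₂ * (RN B₂ Q R)⁻¹ * (BN A₂ B₂)ᴴ)⁻¹ *
        AN A₂ B₂ Q R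

namespace RiccatiAux

variable {p q : Type*} [Fintype p] [DecidableEq p] [Fintype q] [DecidableEq q]

noncomputable def fstep (A : Matrix p p ℂ) (B : Matrix p q ℂ) (Qn : Matrix p p ℂ)
    (Rn : Matrix q q ℂ) (X : Matrix p p ℂ) : Matrix p p ℂ :=
  Qn + Aᴴ * (X⁻¹ + B * Rn⁻¹ * Bᴴ)⁻¹ * A

open scoped MatrixOrder in
lemma inv_sub_inv_psd {X Y : Matrix p p ℂ} (hX : X.PosDef) (hY : Y.PosDef)
    (h : (Y - X).PosSemidef) : (X⁻¹ - Y⁻¹).PosSemidef := by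
  set T := CFC.sqrt (Y - X) with hTdef
  have hTps : T.PosSemidef := (CFC.sqrt_nonneg (Y - X)).posSemidef
  have hTT : T * T = Y - X := CFC.sqrt_mul_sqrt_self (Y - X) h.nonneg
  have hmid : (1 + T * X⁻¹ * T).PosDef := by
    have := hX.inv.posSemidef.conjTranspose_mul_mul_same T
    rw [hTps.isHermitian] at this
    exact Matrix.PosDef.one.add_posSemidef this
  have hYeq : Y = X + T * 1 * T := by rw [mul_one, hTT]; abel
  have hAC : IsUnit ((1 : Matrix p p ℂ)⁻¹ + T * X⁻¹ * T) := by
    rw [inv_one]; exact hmid.isUnit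
  have hw := Matrix.add_mul_mul_inv_eq_sub X T 1 T hX.isUnit isUnit_one hAC
  have hYinv : Y⁻¹ = X⁻¹ - X⁻¹ * T * ((1 : Matrix p p ℂ)⁻¹ + T * X⁻¹ * T)⁻¹ * T * X⁻¹ := by
    rw [hYeq, hw]
  have key : X⁻¹ - Y⁻¹ = (T * X⁻¹)ᴴ * (1 + T * X⁻¹ * T)⁻¹ * (T * X⁻¹) := by
    rw [hYinv, conjTranspose_mul, hX.isHermitian.inv.eq, hTps.isHermitian.eq, inv_one]
    noncomm_ring
  rw [key]
  exact hmid.inv.posSemidef.conjTranspose_mul_mul_same (T * X⁻¹)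

lemma fstep_posDef {A : Matrix p p ℂ} {B : Matrix p q ℂ} {Qn : Matrix p p ℂ}
    {Rn : Matrix q q ℂ} (hQn : Qn.PosDef) (hRn : Rn.PosDef) {X : Matrix p p ℂ}
    (hX : X.PosDef) : (fstep A B Qn Rn X).PosDef := by
  have hS : (B * Rn⁻¹ * Bᴴ).PosSemidef := hRn.inv.posSemidef.mul_mul_conjTranspose_same B
  have h1 : (X⁻¹ + B * Rn⁻¹ * Bᴴ).PosDef := hX.inv.add_posSemidef hS
  exact hQn.add_posSemidef (h1.inv.posSemidef.conjTranspose_mul_mul_same A)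

lemma fstep_mono (A : Matrix p p ℂ) (B : Matrix p q ℂ) (Qn : Matrix p p ℂ)
    {Rn : Matrix q q ℂ} (hRn : Rn.PosDef) {X Y : Matrix p p ℂ}
    (hX : X.PosDef) (hY : Y.PosDef) (h : (Y - X).PosSemidef) :
    (fstep A B Qn Rn Y - fstep A B Qn Rn X).PosSemidef := by
  have hS : (B * Rn⁻¹ * Bᴴ).PosSemidef := hRn.inv.posSemidef.mul_mul_conjTranspose_same B
  have hX1 : (X⁻¹ + B * Rn⁻¹ * Bᴴ).PosDef := hX.inv.add_posSemidef hS
  have hY1 : (Y⁻¹ + B * Rn⁻¹ * Bᴴ).PosDef := hY.inv.add_posSemidef hS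
  have hd : ((X⁻¹ + B * Rn⁻¹ * Bᴴ) - (Y⁻¹ + B * Rn⁻¹ * Bᴴ)).PosSemidef := by
    have := inv_sub_inv_psd hX hY h
    have e : (X⁻¹ + B * Rn⁻¹ * Bᴴ) - (Y⁻¹ + B * Rn⁻¹ * Bᴴ) = X⁻¹ - Y⁻¹ := by abel
    rwa [e]
  have h2 := inv_sub_inv_psd hY1 hX1 hd
  have key : fstep A B Qn Rn Y - fstep A B Qn Rn X =
      Aᴴ * ((Y⁻¹ + B * Rn⁻¹ * Bᴴ)⁻¹ - (X⁻¹ + B * Rn⁻¹ * Bᴴ)⁻¹) * A := by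
    rw [fstep, fstep]; noncomm_ring
  rw [key]
  exact h2.conjTranspose_mul_mul_same A

lemma woodbury_pd {X : Matrix p p ℂ} {B : Matrix p q ℂ} {Rn : Matrix q q ℂ}
    (hX : X.PosDef) (hRn : Rn.PosDef) :
    (X⁻¹ + B * Rn⁻¹ * Bᴴ)⁻¹ = X - X * B * (Rn + Bᴴ * X * B)⁻¹ * Bᴴ * X := by
  have hXi : X⁻¹⁻¹ = X :=
    Matrix.nonsing_inv_nonsing_inv X ((Matrix.isUnit_iff_isUnit_det X).mp hX.isUnit)
  have hRi : Rn⁻¹⁻¹ = Rn :=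
    Matrix.nonsing_inv_nonsing_inv Rn ((Matrix.isUnit_iff_isUnit_det Rn).mp hRn.isUnit)
  have hG : (Rn + Bᴴ * X * B).PosDef :=
    hRn.add_posSemidef (hX.posSemidef.conjTranspose_mul_mul_same B)
  have hAC : IsUnit (Rn⁻¹⁻¹ + Bᴴ * X⁻¹⁻¹ * B) := by rw [hXi, hRi]; exact hG.isUnit
  have hw := Matrix.add_mul_mul_inv_eq_sub X⁻¹ B Rn⁻¹ Bᴴ hX.inv.isUnit hRn.inv.isUnit hAC
  rw [hw, hXi, hRi]

lemma riccati_iff_fstep {A Qn X : Matrix p p ℂ} {B : Matrix p q ℂ} {Rn : Matrix q q ℂ}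
    (hX : X.PosDef) (hRn : Rn.PosDef) :
    (-Qn = Aᴴ * X * A - X - Aᴴ * X * B * (Rn + Bᴴ * X * B)⁻¹ * (Bᴴ * X * A)) ↔
      X = fstep A B Qn Rn X := by
  rw [fstep, woodbury_pd hX hRn]
  have key : Qn + Aᴴ * (X - X * B * (Rn + Bᴴ * X * B)⁻¹ * Bᴴ * X) * A - X =
      Qn + (Aᴴ * X * A - X - Aᴴ * X * B * (Rn + Bᴴ * X * B)⁻¹ * (Bᴴ * X * A)) := by
    simp only [Matrix.mul_sub, Matrix.sub_mul, Matrix.mul_assoc]; abel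
  constructor
  · intro h
    rw [eq_comm, ← sub_eq_zero, key, ← h, add_neg_cancel]
  · intro h
    have h0 : Qn + (Aᴴ * X * A - X - Aᴴ * X * B * (Rn + Bᴴ * X * B)⁻¹ * (Bᴴ * X * A)) = 0 := by
      rw [← key, ← h, sub_self]
    exact (eq_neg_of_add_eq_zero_right h0).symm ▸ rfl


variable {p : Type*} [Fintype p] [DecidableEq p]

lemma polar (M : Matrix p p ℂ) (u v : p → ℂ) :
    star u ⬝ᵥ (M *ᵥ v) =
      ((star (u + v) ⬝ᵥ (M *ᵥ (u + v)) - star u ⬝ᵥ (M *ᵥ u) - star v ⬝ᵥ (M *ᵥ v)) +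
        Complex.I * (star u ⬝ᵥ (M *ᵥ u) + star v ⬝ᵥ (M *ᵥ v) -
          star (u + Complex.I • v) ⬝ᵥ (M *ᵥ (u + Complex.I • v)))) / 2 := by
  have hI : Complex.I ^ 2 = -1 := Complex.I_sq
  simp only [star_add, star_smul, mulVec_add, mulVec_smul, dotProduct_add, add_dotProduct,
    smul_dotProduct, dotProduct_smul, smul_eq_mul, Complex.star_def, Complex.conj_I]
  linear_combination ((star u ⬝ᵥ (M *ᵥ v) - star v ⬝ᵥ (M *ᵥ u)) / 2 - star v ⬝ᵥ (M *ᵥ v) * Complex.I / 2) * hI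

lemma entry_eq (M : Matrix p p ℂ) (i j : p) :
    M i j = star (Pi.single i 1) ⬝ᵥ (M *ᵥ Pi.single j (1 : ℂ)) := by
  simp [mulVec_single, dotProduct, Pi.single_apply, apply_ite (star (R := ℂ)), ite_mul]

lemma herm_form_real {M : Matrix p p ℂ} (hM : M.IsHermitian) (x : p → ℂ) :
    star x ⬝ᵥ (M *ᵥ x) = ((star x ⬝ᵥ (M *ᵥ x)).re : ℂ) := by
  have h : (starRingEnd ℂ) (star x ⬝ᵥ (M *ᵥ x)) = star x ⬝ᵥ (M *ᵥ x) := by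
    show star (star x ⬝ᵥ (M *ᵥ x)) = star x ⬝ᵥ (M *ᵥ x)
    rw [← star_dotProduct, star_mulVec, ← dotProduct_mulVec, hM.eq]
  exact (Complex.conj_eq_iff_re.mp h).symm


variable {q : Type*} [Fintype q] [DecidableEq q]

lemma iter_tendsto {A Qn P : Matrix p p ℂ} {B : Matrix p q ℂ} {Rn : Matrix q q ℂ}
    (hQn : Qn.PosDef) (hRn : Rn.PosDef) (hP : P.PosDef) (hfix : P = fstep A B Qn Rn P)
    (g : ℕ → Matrix p p ℂ) (hg0 : g 0 = Qn) (hgs : ∀ k, g (k + 1) = fstep A B Qn Rn (g k)) :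
    ∃ L : Matrix p p ℂ, L.PosDef ∧ L = fstep A B Qn Rn L ∧
      (∀ k, (g k).PosDef) ∧ Tendsto g atTop (𝓝 L) := by
  have hS : (B * Rn⁻¹ * Bᴴ).PosSemidef := hRn.inv.posSemidef.mul_mul_conjTranspose_same B
  -- each iterate is positive definite
  have hgPD : ∀ k, (g k).PosDef := by
    intro k; induction k with
    | zero => rw [hg0]; exact hQn
    | succ k ih => rw [hgs]; exact fstep_posDef hQn hRn ih
  -- fstep X dominates Qn
  have hQle : ∀ {X : Matrix p p ℂ}, X.PosDef → (fstep A B Qn Rn X - Qn).PosSemidef := by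
    intro X hX
    have h1 := ((hX.inv.add_posSemidef hS).inv.posSemidef.conjTranspose_mul_mul_same A)
    have e : fstep A B Qn Rn X - Qn = Aᴴ * (X⁻¹ + B * Rn⁻¹ * Bᴴ)⁻¹ * A := by
      rw [fstep]; abel
    rwa [e]
  -- monotonicity
  have hmono : ∀ k, (g (k + 1) - g k).PosSemidef := by
    intro k; induction k with
    | zero => rw [hgs, hg0]; exact hQle hQn
    | succ k ih =>
      have h := fstep_mono A B Qn hRn (hgPD k) (hgPD (k + 1)) ih
      rwa [← hgs (k + 1), ← hgs k] at h
  -- bounded above by P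
  have hbound : ∀ k, (P - g k).PosSemidef := by
    intro k; induction k with
    | zero => rw [hg0]; nth_rewrite 1 [hfix]; exact hQle hP
    | succ k ih =>
      have h := fstep_mono A B Qn hRn (hgPD k) hP ih
      rwa [← hfix, ← hgs k] at h
  -- g k dominates Qn
  have hgQn : ∀ k, (g k - Qn).PosSemidef := by
    intro k; induction k with
    | zero => rw [hg0, sub_self]; exact .zero
    | succ k ih =>
      rw [← sub_add_sub_cancel _ (g k) _]
      exact (hmono k).add ih
  -- the scalar sequences
  set r : ℕ → (p → ℂ) → ℝ := fun k x => (star x ⬝ᵥ (g k *ᵥ x)).re with hr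
  have hsubre : ∀ (M N : Matrix p p ℂ) (x : p → ℂ),
      (star x ⬝ᵥ ((M - N) *ᵥ x)).re = (star x ⬝ᵥ (M *ᵥ x)).re - (star x ⬝ᵥ (N *ᵥ x)).re := by
    intro M N x; rw [sub_mulVec, dotProduct_sub, Complex.sub_re]
  have hpsd_re : ∀ {M : Matrix p p ℂ}, M.PosSemidef → ∀ x : p → ℂ,
      0 ≤ (star x ⬝ᵥ (M *ᵥ x)).re := by
    intro M hM x
    have := hM.dotProduct_mulVec_nonneg x
    rw [Complex.le_def] at this
    simpa using this.1
  have hrmono : ∀ x, Monotone fun k => r k x := by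
    intro x
    apply monotone_nat_of_le_succ
    intro k
    have := hpsd_re (hmono k) x
    rw [hsubre] at this
    linarith
  have hrbdd : ∀ x k, r k x ≤ (star x ⬝ᵥ (P *ᵥ x)).re := by
    intro x k
    have := hpsd_re (hbound k) x
    rw [hsubre] at this
    linarith
  set ρ : (p → ℂ) → ℝ := fun x => ⨆ k, r k x with hρ
  have hrt : ∀ x, Tendsto (fun k => r k x) atTop (𝓝 (ρ x)) := by
    intro x
    refine tendsto_atTop_ciSup (hrmono x) ⟨(star x ⬝ᵥ (P *ᵥ x)).re, ?_⟩
    rintro y ⟨k, rfl⟩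
    exact hrbdd x k
  have hq : ∀ x : p → ℂ, Tendsto (fun k => star x ⬝ᵥ (g k *ᵥ x)) atTop (𝓝 ((ρ x : ℂ))) := by
    intro x
    have h1 := (Complex.continuous_ofReal.tendsto (ρ x)).comp (hrt x)
    have h2 : ∀ k, ((r k x : ℝ) : ℂ) = star x ⬝ᵥ (g k *ᵥ x) := fun k =>
      (herm_form_real (hgPD k).isHermitian x).symm
    simpa only [Function.comp_def, h2] using h1
  -- the limit matrix
  set e : p → (p → ℂ) := fun i => Pi.single i 1 with he
  set L : Matrix p p ℂ := Matrix.of fun i j =>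
    (((ρ (e i + e j) : ℂ) - (ρ (e i) : ℂ) - (ρ (e j) : ℂ)) +
      Complex.I * ((ρ (e i) : ℂ) + (ρ (e j) : ℂ) - (ρ (e i + Complex.I • e j) : ℂ))) / 2
    with hL
  have hLt : Tendsto g atTop (𝓝 L) := by
    apply tendsto_pi_nhds.mpr
    intro i
    rw [tendsto_pi_nhds]
    intro j
    have hentry : ∀ k, g k i j =
        ((star (e i + e j) ⬝ᵥ (g k *ᵥ (e i + e j)) - star (e i) ⬝ᵥ (g k *ᵥ (e i)) -
            star (e j) ⬝ᵥ (g k *ᵥ (e j))) +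
          Complex.I * (star (e i) ⬝ᵥ (g k *ᵥ (e i)) + star (e j) ⬝ᵥ (g k *ᵥ (e j)) -
            star (e i + Complex.I • e j) ⬝ᵥ (g k *ᵥ (e i + Complex.I • e j)))) / 2 := by
      intro k
      rw [entry_eq (g k) i j, polar (g k) (e i) (e j)]
    simp only [hentry]
    exact ((((hq (e i + e j)).sub (hq (e i))).sub (hq (e j))).add
      (((hq (e i)).add (hq (e j))).sub (hq (e i + Complex.I • e j)) |>.const_mul
        Complex.I)).div_const 2
  -- L is Hermitian
  have hLH : L.IsHermitian := by
    have h1 : Tendsto (fun k => (g k)ᴴ) atTop (𝓝 Lᴴ) :=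
      (Continuous.matrix_conjTranspose continuous_id).continuousAt.tendsto.comp hLt
    have h2 : (fun k => (g k)ᴴ) = g := funext fun k => (hgPD k).isHermitian.eq
    rw [h2] at h1
    exact tendsto_nhds_unique h1 hLt
  -- L - Qn is positive semidefinite
  have hLQn : (L - Qn).PosSemidef := by
    refine PosSemidef.of_dotProduct_mulVec_nonneg (hLH.sub hQn.isHermitian) fun x => ?_
    have hcont : Continuous fun M : Matrix p p ℂ => star x ⬝ᵥ ((M - Qn) *ᵥ x) :=
      (continuous_const (y := star x)).dotProduct
        (((continuous_id.sub continuous_const)).matrix_mulVec continuous_const)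
    have ht : Tendsto (fun k => star x ⬝ᵥ ((g k - Qn) *ᵥ x)) atTop
        (𝓝 (star x ⬝ᵥ ((L - Qn) *ᵥ x))) := hcont.continuousAt.tendsto.comp hLt
    have hnn : ∀ k, 0 ≤ star x ⬝ᵥ ((g k - Qn) *ᵥ x) := fun k => (hgQn k).dotProduct_mulVec_nonneg x
    have hre : 0 ≤ (star x ⬝ᵥ ((L - Qn) *ᵥ x)).re := by
      refine ge_of_tendsto' (Complex.continuous_re.continuousAt.tendsto.comp ht) fun k => ?_
      have := hnn k; rw [Complex.le_def] at this; simpa using this.1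
    have him : (star x ⬝ᵥ ((L - Qn) *ᵥ x)).im = 0 := by
      have h1 := Complex.continuous_im.continuousAt.tendsto.comp ht
      have h2 : ∀ k, (star x ⬝ᵥ ((g k - Qn) *ᵥ x)).im = 0 := by
        intro k; have := hnn k; rw [Complex.le_def] at this; simpa using this.2.symm
      have h3 : Tendsto (fun k => (star x ⬝ᵥ ((g k - Qn) *ᵥ x)).im) atTop (𝓝 0) := by
        simp only [h2]; exact tendsto_const_nhds
      exact tendsto_nhds_unique h1 h3
    rw [Complex.le_def]
    simp [hre, him]
  have hLpd : L.PosDef := by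
    have h := hQn.add_posSemidef hLQn
    have e' : Qn + (L - Qn) = L := by abel
    rwa [e'] at h
  -- L is a fixed point
  have hfixL : L = fstep A B Qn Rn L := by
    have h1 : Tendsto (fun k => g (k + 1)) atTop (𝓝 L) :=
      hLt.comp (tendsto_add_atTop_nat 1)
    have hdetL : L.det ≠ 0 := hLpd.det_pos.ne'
    have hinvc : ∀ {M : Matrix p p ℂ}, M.det ≠ 0 → ContinuousAt Inv.inv M := by
      intro M hM
      exact continuousAt_matrix_inv M (by rw [Ring.inverse_eq_inv']; exact continuousAt_inv₀ hM)
    have hinv : Tendsto (fun k => (g k)⁻¹) atTop (𝓝 L⁻¹) :=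
      (hinvc hdetL).tendsto.comp hLt
    have hadd : Tendsto (fun k => (g k)⁻¹ + B * Rn⁻¹ * Bᴴ) atTop
        (𝓝 (L⁻¹ + B * Rn⁻¹ * Bᴴ)) := hinv.add tendsto_const_nhds
    have hmidpd : (L⁻¹ + B * Rn⁻¹ * Bᴴ).PosDef := hLpd.inv.add_posSemidef hS
    have hinv2 : Tendsto (fun k => ((g k)⁻¹ + B * Rn⁻¹ * Bᴴ)⁻¹) atTop
        (𝓝 ((L⁻¹ + B * Rn⁻¹ * Bᴴ)⁻¹)) := (hinvc hmidpd.det_pos.ne').tendsto.comp hadd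
    have hψ : Continuous fun M : Matrix p p ℂ => Qn + Aᴴ * M * A :=
      continuous_const.add ((continuous_const.matrix_mul continuous_id).matrix_mul
        continuous_const)
    have h2 : Tendsto (fun k => Qn + Aᴴ * ((g k)⁻¹ + B * Rn⁻¹ * Bᴴ)⁻¹ * A) atTop
        (𝓝 (Qn + Aᴴ * (L⁻¹ + B * Rn⁻¹ * Bᴴ)⁻¹ * A)) :=
      hψ.continuousAt.tendsto.comp hinv2
    have h3 : (fun k => Qn + Aᴴ * ((g k)⁻¹ + B * Rn⁻¹ * Bᴴ)⁻¹ * A) =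
        fun k => g (k + 1) := by
      funext k; rw [hgs k, fstep]
    rw [h3] at h2
    exact tendsto_nhds_unique h1 h2
  exact ⟨L, hLpd, hfixL, hgPD, hLt⟩

variable {p q q₁ q₂ : Type*} [Fintype p] [DecidableEq p] [Fintype q] [DecidableEq q]
  [Fintype q₁] [DecidableEq q₁] [Fintype q₂] [DecidableEq q₂]

lemma mconj_posDef {M : Matrix p p ℂ} (hM : M.PosDef) : (mconj M).PosDef := by
  have h : mconj M = Mᵀ := by
    ext i j
    have h1 := congrFun (congrFun hM.isHermitian.eq j) i
    simpa [mconj, Matrix.map_apply, Matrix.conjTranspose_apply] using h1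
  rw [h]
  exact hM.transpose

lemma fromBlocks_diag_posDef {D₁ : Matrix q₁ q₁ ℂ} {D₂ : Matrix q₂ q₂ ℂ}
    (h₁ : D₁.PosDef) (h₂ : D₂.PosDef) :
    (Matrix.fromBlocks D₁ 0 0 D₂).PosDef := by
  refine PosDef.of_dotProduct_mulVec_pos ?_ ?_
  · have e : (Matrix.fromBlocks D₁ 0 0 D₂)ᴴ = Matrix.fromBlocks D₁ᴴ 0 0 D₂ᴴ := by
      simp [Matrix.fromBlocks_conjTranspose]
    rw [IsHermitian, e, h₁.isHermitian.eq, h₂.isHermitian.eq]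
  · intro x hx
    have hxe : x = Sum.elim (x ∘ Sum.inl) (x ∘ Sum.inr) := by
      funext i; cases i <;> rfl
    have hmv : Matrix.fromBlocks D₁ 0 0 D₂ *ᵥ x =
        Sum.elim (D₁ *ᵥ (x ∘ Sum.inl)) (D₂ *ᵥ (x ∘ Sum.inr)) := by
      rw [hxe, Matrix.fromBlocks_mulVec]
      simp
    have hst : star x = Sum.elim (star (x ∘ Sum.inl)) (star (x ∘ Sum.inr)) := by
      funext i; cases i <;> rfl
    rw [hmv, hst, sumElim_dotProduct_sumElim]
    have hor : (x ∘ Sum.inl) ≠ 0 ∨ (x ∘ Sum.inr) ≠ 0 := by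
      by_contra hcon
      push_neg at hcon
      apply hx
      funext i
      cases i with
      | inl i => exact congrFun hcon.1 i
      | inr i => exact congrFun hcon.2 i
    rcases hor with h | h
    · exact add_pos_of_pos_of_nonneg (h₁.dotProduct_mulVec_pos h) (h₂.posSemidef.dotProduct_mulVec_nonneg _)
    · exact add_pos_of_nonneg_of_pos (h₁.posSemidef.dotProduct_mulVec_nonneg _) (h₂.dotProduct_mulVec_pos h)


end RiccatiAux

set_option maxHeartbeats 1000000 in
/-- If the antilinear system is stabilizable and `P_N` is the unique
Hermitian positive definite solution of the normal Riccati equation, then the normal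
Riccati iteration is well defined (each iterate is Hermitian positive definite) and
converges to `P_N` entrywise. -/
theorem normalIter_tendsto
    (A₂ : Matrix (Fin n) (Fin n) ℂ) (B₂ : Matrix (Fin n) (Fin m) ℂ)
    (Q : Matrix (Fin n) (Fin n) ℂ) (R : Matrix (Fin m) (Fin m) ℂ)
    (hQ : Q.PosDef) (hR : R.PosDef)
    (hstab : AntiStabilizable A₂ B₂)
    (P : Matrix (Fin n) (Fin n) ℂ) (hP : P.PosDef ∧ NormalRiccati A₂ B₂ Q R P)
    (huniq : ∀ P' : Matrix (Fin n) (Fin n) ℂ,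
      P'.PosDef ∧ NormalRiccati A₂ B₂ Q R P' → P' = P) :
    (∀ k : ℕ, (normalIter A₂ B₂ Q R k).PosDef) ∧
    Tendsto (fun k => normalIter A₂ B₂ Q R k) atTop (𝓝 P) := by
  have hQN : (QN A₂ B₂ Q R).PosDef := by
    unfold QN
    have hW : ((mconj Q)⁻¹ + B₂ * R⁻¹ * B₂ᴴ).PosDef :=
      (RiccatiAux.mconj_posDef hQ).inv.add_posSemidef
        (hR.inv.posSemidef.mul_mul_conjTranspose_same B₂)
    exact hQ.add_posSemidef (hW.inv.posSemidef.conjTranspose_mul_mul_same A₂)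
  have hRN : (RN B₂ Q R).PosDef := by
    unfold RN
    exact RiccatiAux.fromBlocks_diag_posDef (RiccatiAux.mconj_posDef hR)
      (hR.add_posSemidef
        ((RiccatiAux.mconj_posDef hQ).posSemidef.conjTranspose_mul_mul_same B₂))
  have hfixP : P = RiccatiAux.fstep (AN A₂ B₂ Q R) (BN A₂ B₂) (QN A₂ B₂ Q R) (RN B₂ Q R) P := by
    have h := hP.2
    unfold NormalRiccati at h
    exact (RiccatiAux.riccati_iff_fstep hP.1 hRN).mp h
  obtain ⟨L, hLpd, hLfix, hgpd, hLt⟩ :=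
    RiccatiAux.iter_tendsto hQN hRN hP.1 hfixP (normalIter A₂ B₂ Q R) rfl (fun _ => rfl)
  have hLP : L = P := by
    refine huniq L ⟨hLpd, ?_⟩
    unfold NormalRiccati
    exact (RiccatiAux.riccati_iff_fstep hLpd hRN).mpr hLfix
  exact ⟨hgpd, hLP ▸ hLt⟩
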